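/- Approximation by functions without flat regions (one-dimensional version of Lemma 5.1): let u : (a,b) → ℝ be bounded with finite total variation on (a,b). Then there exists a sequence of functions u_j : (a,b) → ℝ, each bounded with finite total variation, such that (i) each u_j has no flat regions, i.e. |{x ∈ (a,b) : u_j(x) = q}| = 0 for every q ∈ ℝ, (ii) sup_{x ∈ (a,b)} |u(x) − u_j(x)| ≤ 1/j for every j, and (iii) the total variation of u − u_j on (a,b) tends to 0 as j → ∞. -/

import Mathlib

open MeasureTheory Set Filter

/-- Subadditivity of `eVariationOn` for real-valued functions. -/
lemma evar_add_le (f g : ℝ → ℝ) (s : Set ℝ) :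
    eVariationOn (fun x => f x + g x) s ≤ eVariationOn f s + eVariationOn g s := by
  refine iSup_le ?_
  rintro ⟨n, ⟨uu, hu, us⟩⟩
  calc ∑ i ∈ Finset.range n, edist (f (uu (i+1)) + g (uu (i+1))) (f (uu i) + g (uu i))
      ≤ ∑ i ∈ Finset.range n,
        (edist (f (uu (i+1))) (f (uu i)) + edist (g (uu (i+1))) (g (uu i))) :=
        Finset.sum_le_sum fun i _ => edist_add_add_le _ _ _ _
    _ = (∑ i ∈ Finset.range n, edist (f (uu (i+1))) (f (uu i)))
        + ∑ i ∈ Finset.range n, edist (g (uu (i+1))) (g (uu i)) := Finset.sum_add_distrib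
    _ ≤ _ := add_le_add (eVariationOn.sum_le (f := f) (n := n) hu us) (eVariationOn.sum_le (f := g) (n := n) hu us)

/-- Variation of a linear function on a bounded interval. -/
lemma evar_mul_le (c a b : ℝ) :
    eVariationOn (fun x => c * x) (Ioo a b) ≤ ENNReal.ofReal (|c| * (b - a)) := by
  refine iSup_le ?_
  rintro ⟨n, ⟨uu, hu, us⟩⟩
  have key : ∀ i, edist (c * uu (i+1)) (c * uu i)
      = ENNReal.ofReal (|c| * (uu (i+1) - uu i)) := by
    intro i
    rw [edist_dist, Real.dist_eq]
    congr 1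
    rw [← mul_sub, abs_mul, abs_of_nonneg (sub_nonneg.2 (hu (Nat.le_succ i)))]
  calc ∑ i ∈ Finset.range n, edist (c * uu (i+1)) (c * uu i)
      = ∑ i ∈ Finset.range n, ENNReal.ofReal (|c| * (uu (i+1) - uu i)) := by
        simp only [key]
    _ = ENNReal.ofReal (∑ i ∈ Finset.range n, |c| * (uu (i+1) - uu i)) :=
        (ENNReal.ofReal_sum_of_nonneg fun i _ =>
          mul_nonneg (abs_nonneg c) (sub_nonneg.2 (hu (Nat.le_succ i)))).symm
    _ ≤ ENNReal.ofReal (|c| * (b - a)) := by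
        apply ENNReal.ofReal_le_ofReal
        rw [← Finset.mul_sum, Finset.sum_range_sub (fun i => uu i)]
        refine mul_le_mul_of_nonneg_left ?_ (abs_nonneg c)
        have h1 := (us n).2
        have h2 := (us 0).1
        have h3 := hu (Nat.zero_le n)
        linarith

/-- Approximation by functions without flat regions (one-dimensional version of
Lemma 5.1): a bounded function of finite total variation on `(a,b)` can be
approximated by bounded BV functions without flat regions, uniformly within `1/j`
and with the total variation of the difference tending to `0`. -/
theorem stmt_15
    (a b : ℝ) (hab : a < b)
    (u : ℝ → ℝ) (M : ℝ) (hub : ∀ x ∈ Ioo a b, |u x| ≤ M)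
    (hBV : BoundedVariationOn u (Ioo a b)) :
    ∃ uj : ℕ → ℝ → ℝ,
      (∀ j : ℕ, (∃ Mj : ℝ, ∀ x ∈ Ioo a b, |uj j x| ≤ Mj) ∧
        BoundedVariationOn (uj j) (Ioo a b)) ∧
      (∀ j : ℕ, ∀ q : ℝ, volume {x ∈ Ioo a b | uj j x = q} = 0) ∧
      (∀ j : ℕ, 1 ≤ j → ∀ x ∈ Ioo a b, |u x - uj j x| ≤ 1 / (j : ℝ)) ∧
      Tendsto (fun j : ℕ => eVariationOn (fun x => u x - uj j x) (Ioo a b))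
        atTop (nhds 0) := by
  classical
  set μ : Measure ℝ := volume.restrict (Ioo a b) with hμ
  -- the function u is a.e. measurable for μ
  obtain ⟨p, q, hp, hq, hpq⟩ :=
    hBV.locallyBoundedVariationOn.exists_monotoneOn_sub_monotoneOn
  have humeas : AEMeasurable u μ := by
    have h1 : AEMeasurable p μ := aemeasurable_restrict_of_monotoneOn measurableSet_Ioo hp
    have h2 : AEMeasurable q μ := aemeasurable_restrict_of_monotoneOn measurableSet_Ioo hq
    have := h1.sub h2
    rwa [hpq]
  -- the level sets
  set Sset : ℝ → ℝ → Set ℝ := fun ε r => {x ∈ Ioo a b | u x + ε * x = r} with hSset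
  have hSset_eq : ∀ ε r, Sset ε r = Ioo a b ∩ (fun x => u x + ε * x) ⁻¹' {r} := by
    intro ε r
    ext x
    simp [hSset, and_comm]
  have hSset_null : ∀ ε r, NullMeasurableSet (Sset ε r) μ := by
    intro ε r
    rw [hSset_eq]
    exact measurableSet_Ioo.nullMeasurableSet.inter
      ((humeas.add (measurable_id.const_mul ε).aemeasurable).nullMeasurable (measurableSet_singleton r))
  have hSvol : ∀ ε r, μ (Sset ε r) = volume (Sset ε r) := by
    intro ε r
    rw [hμ, Measure.restrict_apply' measurableSet_Ioo,
      Set.inter_eq_self_of_subset_left (fun x hx => hx.1)]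
  -- the set of bad slopes is countable
  set B : Set ℝ := {ε | ∃ r, volume (Sset ε r) ≠ 0} with hB
  have hBcnt : B.Countable := by
    set Q : B → ℝ := fun ε => Classical.choose ε.2 with hQ
    have hQspec : ∀ ε : B, volume (Sset ε (Q ε)) ≠ 0 := fun ε => Classical.choose_spec ε.2
    have hdisj : Pairwise (Function.onFun (AEDisjoint μ) fun ε : B => Sset ε (Q ε)) := by
      intro ε ε' hne
      have hsub : (Sset ε (Q ε) ∩ Sset ε' (Q ε')).Subsingleton := by
        intro x hx y hy
        have hεne : (ε : ℝ) ≠ (ε' : ℝ) := fun h => hne (Subtype.ext h)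
        have hx1 := hx.1.2
        have hx2 := hx.2.2
        have hy1 := hy.1.2
        have hy2 := hy.2.2
        have hxeq : ((ε : ℝ) - ε') * x = Q ε - Q ε' := by ring_nf; linarith
        have hyeq : ((ε : ℝ) - ε') * y = Q ε - Q ε' := by ring_nf; linarith
        have := hxeq.trans hyeq.symm
        exact mul_left_cancel₀ (sub_ne_zero.2 hεne) this
      exact hsub.measure_zero μ
    have hcnt := Measure.countable_meas_pos_of_disjoint_iUnion₀
      (μ := μ) (fun ε : B => hSset_null ε (Q ε)) hdisj
    have : {i : B | 0 < μ (Sset i (Q i))} = Set.univ := by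
      ext ε
      simp only [mem_setOf_eq, mem_univ, iff_true]
      rw [hSvol]
      exact pos_iff_ne_zero.2 (hQspec ε)
    rw [this] at hcnt
    have : Countable B := Set.countable_univ_iff.mp hcnt
    exact Set.countable_coe_iff.mp this
  -- choose good slopes
  set C : ℝ := 1 + |a| + |b| + (b - a) with hC
  have hC0 : 0 < C := by
    have := abs_nonneg a
    have := abs_nonneg b
    simp only [hC]; linarith
  have hεex : ∀ j : ℕ, ∃ ε : ℝ, ε ∈ Ioc 0 (1 / ((j + 1) * C)) ∧ ε ∉ B := by
    intro j
    by_contra h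
    push_neg at h
    have hsub : Ioc (0:ℝ) (1 / ((j + 1) * C)) ⊆ B := fun ε hε => h ε hε
    have h1 : volume (Ioc (0:ℝ) (1 / ((j + 1) * C))) = 0 :=
      measure_mono_null hsub (Set.Countable.measure_zero hBcnt volume)
    rw [Real.volume_Ioc] at h1
    have hpos : (0:ℝ) < 1 / ((j + 1) * C) := by positivity
    simp only [ENNReal.ofReal_eq_zero, sub_zero] at h1
    linarith
  choose ε hε1 hε2 using hεex
  have hεpos : ∀ j, 0 < ε j := fun j => (hε1 j).1
  have hεle : ∀ j, ε j ≤ 1 / ((j + 1) * C) := fun j => (hε1 j).2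
  have hεC : ∀ j, ε j * C ≤ 1 / (j + 1) := by
    intro j
    have := mul_le_mul_of_nonneg_right (hεle j) hC0.le
    calc ε j * C ≤ 1 / ((j + 1) * C) * C := this
      _ = 1 / (j + 1) := by
          field_simp
  -- define the approximating sequence
  refine ⟨fun j x => u x + ε j * x, ?_, ?_, ?_, ?_⟩
  · -- boundedness and BV
    intro j
    constructor
    · refine ⟨M + ε j * C, fun x hx => ?_⟩
      have hxb : |x| ≤ C := by
        have h1 : x < b := hx.2
        have h2 : a < x := hx.1
        have : |x| ≤ max |a| |b| := abs_le_max_abs_abs h2.le h1.le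
        have hm : max |a| |b| ≤ |a| + |b| := max_le (le_add_of_nonneg_right (abs_nonneg b))
          (le_add_of_nonneg_left (abs_nonneg a))
        simp only [hC]
        linarith
      calc |u x + ε j * x| ≤ |u x| + |ε j * x| := abs_add_le _ _
        _ ≤ M + ε j * C := by
            refine add_le_add (hub x hx) ?_
            rw [abs_mul, abs_of_pos (hεpos j)]
            exact mul_le_mul_of_nonneg_left hxb (hεpos j).le
    · -- bounded variation
      have hfin : eVariationOn (fun x => ε j * x) (Ioo a b) ≠ ⊤ :=
        ne_top_of_le_ne_top ENNReal.ofReal_ne_top (evar_mul_le (ε j) a b)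
      exact ne_top_of_le_ne_top (ENNReal.add_ne_top.2 ⟨hBV, hfin⟩)
        (evar_add_le u (fun x => ε j * x) (Ioo a b))
  · -- no flat regions
    intro j r
    have hj := hε2 j
    rw [hB] at hj
    simp only [mem_setOf_eq, not_exists, not_not] at hj
    exact hj r
  · -- uniform approximation
    intro j hj x hx
    have hxb : |x| ≤ C := by
      have h1 : x < b := hx.2
      have h2 : a < x := hx.1
      have : |x| ≤ max |a| |b| := abs_le_max_abs_abs h2.le h1.le
      have hm : max |a| |b| ≤ |a| + |b| := max_le (le_add_of_nonneg_right (abs_nonneg b))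
        (le_add_of_nonneg_left (abs_nonneg a))
      simp only [hC]
      linarith
    have h1 : |u x - (u x + ε j * x)| = ε j * |x| := by
      rw [show u x - (u x + ε j * x) = -(ε j * x) by ring, abs_neg, abs_mul,
        abs_of_pos (hεpos j)]
    rw [h1]
    have h2 : ε j * |x| ≤ ε j * C := mul_le_mul_of_nonneg_left hxb (hεpos j).le
    have h3 : (1:ℝ) / (j + 1) ≤ 1 / j := by
      apply one_div_le_one_div_of_le
      · exact_mod_cast Nat.pos_of_ne_zero (by omega)
      · linarith
    exact h2.trans ((hεC j).trans h3)
  · -- variation of difference tends to zero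
    have hbound : ∀ j : ℕ, eVariationOn (fun x => u x - (u x + ε j * x)) (Ioo a b)
        ≤ ENNReal.ofReal (1 / (j + 1)) := by
      intro j
      have heq : (fun x => u x - (u x + ε j * x)) = fun x => (-(ε j)) * x := by
        funext x; ring
      rw [heq]
      refine le_trans (evar_mul_le (-(ε j)) a b) (ENNReal.ofReal_le_ofReal ?_)
      rw [abs_neg, abs_of_pos (hεpos j)]
      have hba : b - a ≤ C := by
        have := abs_nonneg a
        have := abs_nonneg b
        simp only [hC]; linarith
      calc ε j * (b - a) ≤ ε j * C :=
            mul_le_mul_of_nonneg_left hba (hεpos j).le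
        _ ≤ 1 / (j + 1) := hεC j
    have hupper : Tendsto (fun j : ℕ => ENNReal.ofReal (1 / (j + 1 : ℝ)))
        atTop (nhds 0) := by
      have h := ENNReal.tendsto_ofReal
        (tendsto_one_div_add_atTop_nhds_zero_nat)
      simpa using h
    exact tendsto_of_tendsto_of_tendsto_of_le_of_le tendsto_const_nhds hupper
      (fun j => zero_le) hbound
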